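/- Let Z(u) = u/(1+u)² and U(z) = (1 - sqrt(1-4z))/(2z) - 1 (with the principal branch of the square root, and U(0) = 0). Then U maps ℂ \ [1/4, ∞) bijectively onto the open unit disc, Z maps the open unit disc bijectively onto ℂ \ [1/4, ∞), and the two maps are mutually inverse holomorphic functions. -/

import Mathlib

open Complex

/-- `Z(u) = u/(1+u)²`. -/
noncomputable def Zmap (u : ℂ) : ℂ := u / (1 + u) ^ 2

/-- `U(z) = (1 - sqrt(1-4z))/(2z) - 1` with the principal branch of the square
root, extended by `U(0) = 0`. -/
noncomputable def Umap (z : ℂ) : ℂ :=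
  if z = 0 then 0 else (1 - (1 - 4 * z) ^ ((1 : ℂ) / 2)) / (2 * z) - 1

/-- The slit plane `ℂ \ [1/4, ∞)`. -/
def slitPlane14 : Set ℂ := {z : ℂ | ¬(z.im = 0 ∧ (1 / 4 : ℝ) ≤ z.re)}

noncomputable def sq2 (z : ℂ) : ℂ := z ^ ((1:ℂ)/2)

lemma sq_sq2 {z : ℂ} (hz : z ≠ 0) : (sq2 z) ^ 2 = z := by
  rw [sq2, sq, ← cpow_add _ _ hz]; norm_num

lemma re_sq2_pos {z : ℂ} (hz : z ∈ slitPlane) : 0 < (sq2 z).re := by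
  have h1 : ((1:ℂ)/2) = (2⁻¹ : ℂ) := by norm_num
  rw [sq2, h1, cpow_inv_two_re]
  apply Real.sqrt_pos.mpr
  rcases hz with h | h
  · have := abs_le.mp (Complex.abs_re_le_norm z); linarith
  · have := Complex.abs_re_lt_norm.mpr h
    have := neg_abs_le z.re
    linarith

lemma sq_mem_slit {v : ℂ} (hv : 0 < v.re) : v ^ 2 ∈ slitPlane := by
  rcases eq_or_ne v.im 0 with h | h
  · left
    simp [sq, Complex.mul_re, h]
    positivity
  · right
    simp only [sq, Complex.mul_im]
    intro h'
    exact mul_ne_zero hv.ne' h (by linarith)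

lemma sq2_sq {v : ℂ} (hv : 0 < v.re) : sq2 (v ^ 2) = v := by
  have hv0 : v ≠ 0 := fun h => by simp [h] at hv
  have h2 : (sq2 (v ^ 2)) ^ 2 = v ^ 2 := sq_sq2 (pow_ne_zero 2 hv0)
  have hre : 0 < (sq2 (v ^ 2)).re := re_sq2_pos (sq_mem_slit hv)
  have : (sq2 (v ^ 2) - v) * (sq2 (v ^ 2) + v) = 0 := by ring_nf; linear_combination h2
  rcases mul_eq_zero.mp this with h | h
  · exact sub_eq_zero.mp h
  · exfalso
    have : (sq2 (v^2)).re = -v.re := by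
      have := congrArg Complex.re h
      simp [Complex.add_re] at this
      linarith
    linarith

lemma mem_slit14_iff {z : ℂ} : z ∈ slitPlane14 ↔ (1 - 4 * z) ∈ slitPlane := by
  have hre : (1 - 4*z).re = 1 - 4*z.re := by simp
  have him : (1 - 4*z).im = -(4*z.im) := by simp
  simp only [slitPlane14, Set.mem_setOf_eq, Complex.mem_slitPlane_iff, hre, him]
  constructor
  · intro h
    by_cases hi : z.im = 0
    · left; push_neg at h; linarith [h hi]
    · right; simpa using hi
  · rintro (h | h) ⟨h1, h2⟩
    · linarith
    · simp [h1] at h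

lemma slit14_facts {z : ℂ} (hz : z ∈ slitPlane14) :
    (sq2 (1-4*z))^2 = 1-4*z ∧ 0 < (sq2 (1-4*z)).re ∧ 1 + sq2 (1-4*z) ≠ 0 := by
  have h1 := mem_slit14_iff.mp hz
  have h0 : (1:ℂ) - 4*z ≠ 0 := slitPlane_ne_zero h1
  have hre := re_sq2_pos h1
  refine ⟨sq_sq2 h0, hre, fun h => ?_⟩
  have := congrArg Complex.re h
  simp [Complex.add_re] at this
  linarith [this ▸ hre]

lemma Umap_eq {z : ℂ} (hz : z ∈ slitPlane14) :
    Umap z = (1 - sq2 (1 - 4*z)) / (1 + sq2 (1 - 4*z)) := by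
  obtain ⟨hw2, hwre, h1w⟩ := slit14_facts hz
  rcases eq_or_ne z 0 with rfl | hz0
  · simp [Umap, sq2, one_cpow]
  · rw [Umap, if_neg hz0]
    have : (1 - 4*z) ^ ((1:ℂ)/2) = sq2 (1-4*z) := rfl
    rw [show (1 - 4*z : ℂ) = 1 - 4*z from rfl]
    set w := sq2 (1-4*z) with hw
    rw [show ((1:ℂ) - 4*z) ^ ((1:ℂ)/2) = w from rfl]
    field_simp
    linear_combination -hw2

lemma U_mapsTo : Set.MapsTo Umap slitPlane14 (Metric.ball (0:ℂ) 1) := by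
  intro z hz
  obtain ⟨hw2, hwre, h1w⟩ := slit14_facts hz
  rw [Metric.mem_ball, dist_zero_right, Umap_eq hz]
  set w := sq2 (1-4*z)
  rw [norm_div, div_lt_one (norm_pos_iff.mpr h1w)]
  have hsq : ‖(1:ℂ) - w‖^2 < ‖(1:ℂ) + w‖^2 := by
    rw [Complex.sq_norm, Complex.sq_norm]
    simp only [Complex.normSq_apply, Complex.sub_re, Complex.sub_im, Complex.add_re,
      Complex.add_im, Complex.one_re, Complex.one_im]
    nlinarith
  exact lt_of_pow_lt_pow_left₀ 2 (norm_nonneg _) hsq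

lemma one_add_ne {u : ℂ} (hu : u ∈ Metric.ball (0:ℂ) 1) : 1 + u ≠ 0 := by
  rw [Metric.mem_ball, dist_zero_right] at hu
  intro h
  have : u = -1 := by linear_combination h
  rw [this] at hu
  simp at hu

lemma re_v_pos {u : ℂ} (hu : u ∈ Metric.ball (0:ℂ) 1) : 0 < ((1-u)/(1+u)).re := by
  have h1u := one_add_ne hu
  rw [Metric.mem_ball, dist_zero_right] at hu
  have hn : Complex.normSq u < 1 := by
    have : ‖u‖^2 < 1 := by nlinarith [norm_nonneg u]
    rwa [← Complex.sq_norm]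
  have hs : 0 < Complex.normSq (1+u) := Complex.normSq_pos.mpr h1u
  rw [Complex.div_re, ← add_div]
  apply div_pos _ hs
  simp only [Complex.sub_re, Complex.sub_im, Complex.add_re, Complex.add_im,
    Complex.one_re, Complex.one_im, Complex.normSq_apply] at *
  nlinarith

lemma Z_rel {u : ℂ} (h1u : 1 + u ≠ 0) : 1 - 4 * Zmap u = ((1-u)/(1+u))^2 := by
  rw [Zmap]; field_simp; ring

lemma Z_mapsTo : Set.MapsTo Zmap (Metric.ball (0:ℂ) 1) slitPlane14 := by
  intro u hu
  rw [mem_slit14_iff, Z_rel (one_add_ne hu)]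
  exact sq_mem_slit (re_v_pos hu)

lemma UZ_id : ∀ u ∈ Metric.ball (0:ℂ) 1, Umap (Zmap u) = u := by
  intro u hu
  have h1u := one_add_ne hu
  have hvre := re_v_pos hu
  rw [Umap_eq (Z_mapsTo hu), Z_rel h1u, sq2_sq hvre]
  have h1v : (1:ℂ) + (1-u)/(1+u) ≠ 0 := by
    intro h
    have := congrArg Complex.re h
    simp [Complex.add_re] at this
    linarith [this ▸ hvre]
  field_simp
  ring

lemma ZU_id : ∀ z ∈ slitPlane14, Zmap (Umap z) = z := by
  intro z hz
  obtain ⟨hw2, hwre, h1w⟩ := slit14_facts hz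
  rw [Umap_eq hz, Zmap]
  set w := sq2 (1-4*z)
  have h1u : 1 + (1-w)/(1+w) = 2/(1+w) := by field_simp; ring
  rw [h1u]
  have h2w : (2:ℂ)/(1+w) ≠ 0 := div_ne_zero two_ne_zero h1w
  field_simp
  linear_combination -hw2

lemma U_diff : DifferentiableOn ℂ Umap slitPlane14 := by
  have hg : DifferentiableOn ℂ
      (fun z => (1 - sq2 (1-4*z)) / (1 + sq2 (1-4*z))) slitPlane14 := by
    intro z hz
    obtain ⟨hw2, hwre, h1w⟩ := slit14_facts hz
    apply DifferentiableAt.differentiableWithinAt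
    have hb : DifferentiableAt ℂ (fun z : ℂ => 1 - 4*z) z := by fun_prop
    have hw : DifferentiableAt ℂ (fun z => sq2 (1-4*z)) z :=
      DifferentiableAt.cpow hb (differentiableAt_const _) (mem_slit14_iff.mp hz)
    exact ((differentiableAt_const _).sub hw).div ((differentiableAt_const _).add hw) h1w
  exact hg.congr fun z hz => Umap_eq hz

lemma Z_diff : DifferentiableOn ℂ Zmap (Metric.ball (0:ℂ) 1) := by
  intro u hu
  apply DifferentiableAt.differentiableWithinAt
  apply DifferentiableAt.div
  · fun_prop
  · fun_prop
  · exact pow_ne_zero 2 (one_add_ne hu)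


/-- `U` maps `ℂ \ [1/4, ∞)` bijectively onto the open unit disc, `Z` maps the
open unit disc bijectively onto `ℂ \ [1/4, ∞)`, these maps are mutually inverse,
and both are holomorphic on their respective domains. -/
theorem Z_U_bijective :
    Set.BijOn Umap slitPlane14 (Metric.ball (0 : ℂ) 1) ∧
    Set.BijOn Zmap (Metric.ball (0 : ℂ) 1) slitPlane14 ∧
    (∀ z ∈ slitPlane14, Zmap (Umap z) = z) ∧
    (∀ u ∈ Metric.ball (0 : ℂ) 1, Umap (Zmap u) = u) ∧
    DifferentiableOn ℂ Umap slitPlane14 ∧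
    DifferentiableOn ℂ Zmap (Metric.ball (0 : ℂ) 1) := by
  have hinv : Set.InvOn Zmap Umap slitPlane14 (Metric.ball (0:ℂ) 1) :=
    ⟨fun z hz => ZU_id z hz, fun u hu => UZ_id u hu⟩
  exact ⟨hinv.bijOn U_mapsTo Z_mapsTo, hinv.symm.bijOn Z_mapsTo U_mapsTo,
    ZU_id, UZ_id, U_diff, Z_diff⟩
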